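/- Let X be a digraph on n vertices. The coefficient of t^{n−2} in the characteristic polynomial of the Hermitian adjacency matrix H(X) equals −e, where e is the number of edges of the underlying graph Γ(X). -/

import Mathlib

open Matrix Complex Polynomial

/-- Hermitian adjacency matrix of a digraph given by its arc relation `E`. -/
def hermAdj {V : Type*} (E : V → V → Prop) [DecidableRel E] : Matrix V V ℂ :=
  fun u v =>
    if E u v ∧ E v u then 1
    else if E u v then Complex.I
    else if E v u then -Complex.I
    else 0

/-- The underlying (simple) graph of a digraph given by its arc relation `E`. -/
def underlying {V : Type*} (E : V → V → Prop) : SimpleGraph V where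
  Adj u v := u ≠ v ∧ (E u v ∨ E v u)
  symm := ⟨fun u v h => ⟨h.1.symm, h.2.symm⟩⟩
  loopless := ⟨fun v h => h.1 rfl⟩

lemma hermAdj_mul_symm {V : Type*} (E : V → V → Prop) [DecidableRel E] (i j : V) :
    hermAdj E i j * hermAdj E j i = if (E i j ∨ E j i) then 1 else 0 := by
  unfold hermAdj
  by_cases h1 : E i j <;> by_cases h2 : E j i <;>
    simp [h1, h2, Complex.I_mul_I]

open Equiv Finset in
open scoped Classical in
theorem stmt1 {n : ℕ} (hn : 2 ≤ n) (E : Fin n → Fin n → Prop) [DecidableRel E]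
    (hirr : ∀ v, ¬ E v v) :
    (hermAdj E).charpoly.coeff (n - 2) = -((underlying E).edgeFinset.card : ℂ) := by
  set M := hermAdj E with hM
  have hdiag : ∀ v, M v v = 0 := fun v => by simp [hM, hermAdj, hirr v]
  set f : Equiv.Perm (Fin n) → ℂ := fun σ =>
    ((Equiv.Perm.sign σ : ℤ) : ℂ) *
      (if σ.support.card = 2 then ∏ i ∈ σ.support, (-(M (σ i) i)) else 0) with hf
  -- Step 1: the coefficient as a sum over permutations
  have key : M.charpoly.coeff (n - 2) = ∑ σ : Equiv.Perm (Fin n), f σ := by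
    rw [Matrix.charpoly, Matrix.det_apply', Polynomial.finset_sum_coeff]
    refine Finset.sum_congr rfl fun σ _ => ?_
    have hprod : ∏ i : Fin n, charmatrix M (σ i) i
        = Polynomial.C (∏ i ∈ σ.support, (-(M (σ i) i))) * X ^ (n - σ.support.card) := by
      rw [← Finset.prod_compl_mul_prod σ.support, mul_comm]
      congr 1
      · rw [map_prod]
        exact Finset.prod_congr rfl fun i hi => by
          rw [charmatrix_apply_ne M _ _ (Equiv.Perm.mem_support.mp hi), map_neg]
      · have h1 : ∀ i ∈ σ.supportᶜ, charmatrix M (σ i) i = X := by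
          intro i hi
          have : σ i = i := Equiv.Perm.notMem_support.mp (Finset.mem_compl.mp hi)
          rw [this, charmatrix_apply_eq, hdiag, map_zero, sub_zero]
        rw [Finset.prod_congr rfl h1, Finset.prod_const, Finset.card_compl,
          Fintype.card_fin]
    rw [Polynomial.coeff_intCast_mul, hprod, Polynomial.coeff_C_mul,
      Polynomial.coeff_X_pow]
    have hcle : σ.support.card ≤ n := le_of_le_of_eq (Finset.card_le_univ _)
      (by simp [Fintype.card_fin])
    simp only [hf]
    by_cases h2 : σ.support.card = 2
    · rw [if_pos h2, if_pos (show n - 2 = n - σ.support.card by omega)]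
      ring
    · rw [if_neg h2, if_neg (show ¬ n - 2 = n - σ.support.card by omega)]
      ring
  -- Step 2: the sum is supported on swaps, which are the image of offDiag
  set s : Finset (Equiv.Perm (Fin n)) :=
    (Finset.univ.offDiag).image (fun p : Fin n × Fin n => Equiv.swap p.1 p.2) with hs
  have himg : ∀ σ ∉ s, f σ = 0 := by
    intro σ hσ
    by_cases h2 : σ.support.card = 2
    · exfalso
      obtain ⟨x, y, hxy, rfl⟩ := Equiv.Perm.card_support_eq_two.mp h2
      exact hσ (Finset.mem_image.mpr ⟨(x, y),
        Finset.mem_offDiag.mpr ⟨Finset.mem_univ _, Finset.mem_univ _, hxy⟩, rfl⟩)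
    · simp only [hf, h2, if_false, mul_zero]
  have hsum1 : ∑ σ : Equiv.Perm (Fin n), f σ = ∑ σ ∈ s, f σ :=
    (Finset.sum_subset (Finset.subset_univ s) fun σ _ h => himg σ h).symm
  -- Step 3: fibers of the swap map have cardinality 2
  have hfib : ∀ p ∈ Finset.univ.offDiag,
      (Finset.univ.offDiag.filter
        (fun q : Fin n × Fin n => Equiv.swap q.1 q.2 = Equiv.swap p.1 p.2))
        = {p, (p.2, p.1)} := by
    rintro ⟨i, j⟩ hp
    have hij : i ≠ j := (Finset.mem_offDiag.mp hp).2.2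
    ext ⟨a, b⟩
    simp only [Finset.mem_filter, Finset.mem_offDiag, Finset.mem_univ, true_and,
      Finset.mem_insert, Finset.mem_singleton, Prod.mk.injEq]
    constructor
    · rintro ⟨hab, hsw⟩
      have hsupp : ({a, b} : Finset (Fin n)) = {i, j} := by
        rw [← Equiv.Perm.support_swap hab, ← Equiv.Perm.support_swap hij, hsw]
      have ha : a = i ∨ a = j := by
        have : a ∈ ({i, j} : Finset (Fin n)) := hsupp ▸ by simp
        simpa using this
      have hb : b = i ∨ b = j := by
        have : b ∈ ({i, j} : Finset (Fin n)) := hsupp ▸ by simp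
        simpa using this
      rcases ha with rfl | rfl <;> rcases hb with rfl | rfl <;> tauto
    · rintro (⟨rfl, rfl⟩ | ⟨rfl, rfl⟩)
      · exact ⟨hij, rfl⟩
      · exact ⟨hij.symm, Equiv.swap_comm _ _⟩
  -- Step 4: sum over offDiag equals twice the sum over s
  have hsum2 : ∑ p ∈ Finset.univ.offDiag, f (Equiv.swap p.1 p.2) = 2 * ∑ σ ∈ s, f σ := by
    rw [Finset.sum_comp f (fun p : Fin n × Fin n => Equiv.swap p.1 p.2), ← hs,
      Finset.mul_sum]
    refine Finset.sum_congr rfl fun σ hσ => ?_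
    obtain ⟨p, hp, rfl⟩ := Finset.mem_image.mp hσ
    rw [hfib p hp]
    have hij : p.1 ≠ p.2 := (Finset.mem_offDiag.mp hp).2.2
    have : ((p : Fin n × Fin n)) ≠ (p.2, p.1) := by
      intro h
      exact hij (by rw [Prod.ext_iff] at h; exact h.1)
    rw [Finset.card_insert_of_notMem (by simpa using this), Finset.card_singleton]
    simp [two_mul]
  -- Step 5: compute f on swaps
  have hswap : ∀ p ∈ Finset.univ.offDiag,
      f (Equiv.swap p.1 p.2) = -(if (underlying E).Adj p.1 p.2 then (1 : ℂ) else 0) := by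
    rintro ⟨i, j⟩ hp
    have hij : i ≠ j := (Finset.mem_offDiag.mp hp).2.2
    have hsupp := Equiv.Perm.support_swap hij
    have hcard : (Equiv.swap i j).support.card = 2 := by
      rw [hsupp, Finset.card_insert_of_notMem (by simpa using hij), Finset.card_singleton]
    have hmul : M j i * M i j = if (E i j ∨ E j i) then 1 else 0 := by
      rw [mul_comm]; exact hermAdj_mul_symm E i j
    have hadj : (underlying E).Adj i j ↔ (E i j ∨ E j i) := by
      simp [underlying, hij]
    rw [hf]
    simp only
    rw [if_pos hcard, Equiv.Perm.sign_swap hij, hsupp,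
      Finset.prod_insert (by simpa using hij), Finset.prod_singleton,
      Equiv.swap_apply_left, Equiv.swap_apply_right, neg_mul_neg, hmul]
    by_cases h : E i j ∨ E j i
    · rw [if_pos h, if_pos (hadj.mpr h)]
      simp
    · rw [if_neg h, if_neg (fun hc => h (hadj.mp hc))]
      simp
  -- Step 6: put it together
  have hcount : ∑ p ∈ Finset.univ.offDiag, f (Equiv.swap p.1 p.2)
      = -(2 * ((underlying E).edgeFinset.card : ℂ)) := by
    rw [Finset.sum_congr rfl hswap, Finset.sum_neg_distrib, Finset.sum_boole]
    have hset : Finset.univ.offDiag.filter (fun p : Fin n × Fin n => (underlying E).Adj p.1 p.2)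
        = Finset.univ.filter (fun p : Fin n × Fin n => (underlying E).Adj p.1 p.2) := by
      ext p
      simp only [Finset.mem_filter, Finset.mem_offDiag, Finset.mem_univ, true_and]
      exact ⟨fun h => h.2, fun h => ⟨(underlying E).ne_of_adj h, h⟩⟩
    have h2e := SimpleGraph.two_mul_card_edgeFinset (G := underlying E)
    rw [hset]
    have hfe : (Finset.univ.filter (fun p : Fin n × Fin n => (underlying E).Adj p.1 p.2))
        = (Finset.univ.filter
            (fun x : Fin n × Fin n => match x with | (x, y) => (underlying E).Adj x y)) :=
      Finset.filter_congr (fun p _ => Iff.rfl)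
    rw [hfe, ← h2e]
    norm_cast
  have h2ne : (2 : ℂ) ≠ 0 := two_ne_zero
  have := key.trans hsum1
  have h2 : 2 * M.charpoly.coeff (n - 2) = 2 * -((underlying E).edgeFinset.card : ℂ) := by
    rw [this, ← hsum2, hcount]; ring
  exact mul_left_cancel₀ h2ne h2
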